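/- (Elimination of the outer replicas at an eigenvalue.) Let ξ ∈ ℂ, m, ε ∈ ℝ, write B := B_m, and let Ĥ₁(ξ) be the 6×6 matrix with 2×2 blocks indexed by k, k' ∈ {1, 0, −1}: diagonal blocks k·I₂ + ξ·σ, blocks (k, k−1) equal to εB, blocks (k, k+1) equal to εB*, other blocks zero. Suppose ψ = (ψ₁, ψ₀, ψ₋₁) ∈ ℂ² × ℂ² × ℂ² satisfies Ĥ₁(ξ)ψ = Eψ for some E ∈ ℂ with (1−E)² ≠ |ξ|² and (1+E)² ≠ |ξ|². Then ψ₁ = −ε·((1−E)·I₂ + ξ·σ)⁻¹·B·ψ₀, ψ₋₁ = −ε·((−1−E)·I₂ + ξ·σ)⁻¹·B*·ψ₀, and (ξ·σ − E·I₂ − ε²·(B*·((1−E)·I₂ + ξ·σ)⁻¹·B + B·((−1−E)·I₂ + ξ·σ)⁻¹·B*))·ψ₀ = 0. In particular, if ψ ≠ 0 then ψ₀ ≠ 0. -/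

import Mathlib

open Matrix Complex
open scoped Kronecker

noncomputable section

def σ1 : Matrix (Fin 2) (Fin 2) ℂ := !![0, 1; 1, 0]
def σ2 : Matrix (Fin 2) (Fin 2) ℂ := !![0, -Complex.I; Complex.I, 0]
def σ3 : Matrix (Fin 2) (Fin 2) ℂ := !![1, 0; 0, -1]

/-- `ξ·σ = ξ₁σ₁ + ξ₂σ₂ = !![0, conj ξ; ξ, 0]`. -/
def xiSigma (ξ : ℂ) : Matrix (Fin 2) (Fin 2) ℂ := !![0, (starRingEnd ℂ) ξ; ξ, 0]

def Bm (m : ℝ) : Matrix (Fin 2) (Fin 2) ℂ :=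
  (((1 + m) / 2 : ℝ) : ℂ) • !![0, 1; 0, 0] + (((1 - m) / 2 : ℝ) : ℂ) • !![0, 0; 1, 0]

/-- The 2×2 block of the bulk replica Hamiltonian at block position `(k, k')`. -/
def replicaBlock (ξ : ℂ) (m ε : ℝ) (k k' : ℤ) : Matrix (Fin 2) (Fin 2) ℂ :=
  if k' = k then (k : ℂ) • (1 : Matrix (Fin 2) (Fin 2) ℂ) + xiSigma ξ
  else if k' = k - 1 then (ε : ℂ) • Bm m
  else if k' = k + 1 then (ε : ℂ) • (Bm m)ᴴ
  else 0

/-- The bulk replica Hamiltonian `Ĥ_n(ξ)`, block tridiagonal with blocks indexed by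
`k, k' ∈ {-n, …, n}` (here realized by `Fin (2n+1)` via `k = j - n`). -/
def Hrep (n : ℕ) (ξ : ℂ) (m ε : ℝ) :
    Matrix (Fin (2 * n + 1) × Fin 2) (Fin (2 * n + 1) × Fin 2) ℂ :=
  fun p q => replicaBlock ξ m ε ((p.1 : ℤ) - n) ((q.1 : ℤ) - n) p.2 q.2

lemma detM (ξ a : ℂ) : (a • (1 : Matrix (Fin 2) (Fin 2) ℂ) + xiSigma ξ).det
    = a ^ 2 - ((‖ξ‖ : ℂ)) ^ 2 := by
  have h : a • (1 : Matrix (Fin 2) (Fin 2) ℂ) + xiSigma ξ = !![a, (starRingEnd ℂ) ξ; ξ, a] := by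
    ext i j; fin_cases i <;> fin_cases j <;> simp [xiSigma]
  rw [h, Matrix.det_fin_two_of]
  rw [← Complex.ofReal_pow, Complex.sq_norm, ← Complex.mul_conj]
  ring

/-- elimination of the outer replicas at an eigenvalue: if
`Ĥ₁(ξ)ψ = Eψ` with `(1∓E)² ≠ |ξ|²`, then the outer components `ψ₁, ψ₋₁` are determined by
the central component `ψ₀`, which solves the reduced `2×2` eigenproblem; in particular
`ψ ≠ 0 → ψ₀ ≠ 0`. Here block index `2 ↔ k = 1`, `1 ↔ k = 0`, `0 ↔ k = -1`. -/
theorem outer_replica_elimination (ξ : ℂ) (m ε : ℝ) (E : ℂ)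
    (hE1 : (1 - E) ^ 2 ≠ ((‖ξ‖ : ℂ)) ^ 2)
    (hE2 : (1 + E) ^ 2 ≠ ((‖ξ‖ : ℂ)) ^ 2)
    (ψ : Fin (2 * 1 + 1) × Fin 2 → ℂ)
    (hψ : (Hrep 1 ξ m ε).mulVec ψ = E • ψ) :
    (fun i => ψ ((2 : Fin (2 * 1 + 1)), i))
        = (-(ε : ℂ)) • ((((1 - E) • (1 : Matrix (Fin 2) (Fin 2) ℂ) + xiSigma ξ)⁻¹ *
            Bm m).mulVec (fun j => ψ ((1 : Fin (2 * 1 + 1)), j))) ∧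
    (fun i => ψ ((0 : Fin (2 * 1 + 1)), i))
        = (-(ε : ℂ)) • ((((-1 - E) • (1 : Matrix (Fin 2) (Fin 2) ℂ) + xiSigma ξ)⁻¹ *
            (Bm m)ᴴ).mulVec (fun j => ψ ((1 : Fin (2 * 1 + 1)), j))) ∧
    (xiSigma ξ - E • (1 : Matrix (Fin 2) (Fin 2) ℂ) -
        ((ε : ℂ)) ^ 2 •
          ((Bm m)ᴴ * ((1 - E) • (1 : Matrix (Fin 2) (Fin 2) ℂ) + xiSigma ξ)⁻¹ * Bm m +
            Bm m * ((-1 - E) • (1 : Matrix (Fin 2) (Fin 2) ℂ) + xiSigma ξ)⁻¹ * (Bm m)ᴴ)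
      ).mulVec (fun j => ψ ((1 : Fin (2 * 1 + 1)), j)) = 0 ∧
    (ψ ≠ 0 → (fun j => ψ ((1 : Fin (2 * 1 + 1)), j)) ≠ 0) := by
  set ψ1 : Fin 2 → ℂ := fun i => ψ ((2 : Fin (2 * 1 + 1)), i) with hψ1
  set ψ0 : Fin 2 → ℂ := fun i => ψ ((1 : Fin (2 * 1 + 1)), i) with hψ0
  set ψm : Fin 2 → ℂ := fun i => ψ ((0 : Fin (2 * 1 + 1)), i) with hψm
  set Mp : Matrix (Fin 2) (Fin 2) ℂ := (1 - E) • (1 : Matrix (Fin 2) (Fin 2) ℂ) + xiSigma ξ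
    with hMp
  set Mn : Matrix (Fin 2) (Fin 2) ℂ := (-1 - E) • (1 : Matrix (Fin 2) (Fin 2) ℂ) + xiSigma ξ
    with hMn
  have hup : IsUnit Mp.det := by
    rw [hMp, detM]; exact isUnit_iff_ne_zero.mpr (sub_ne_zero.mpr hE1)
  have hun : IsUnit Mn.det := by
    rw [hMn, detM]
    refine isUnit_iff_ne_zero.mpr (sub_ne_zero.mpr ?_)
    intro h; apply hE2; rw [← h]; ring
  -- block equations
  have E1 : Mp.mulVec ψ1 = (-(ε : ℂ)) • (Bm m).mulVec ψ0 := by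
    funext i
    have h := congrFun hψ ((2 : Fin 3), i)
    fin_cases i <;>
    · simp [Hrep, Matrix.mulVec, dotProduct, Fintype.sum_prod_type, Fin.sum_univ_succ,
        replicaBlock, Matrix.one_apply] at h
      simp [hψ1, hψ0, hMp, Matrix.mulVec, dotProduct, Fin.sum_univ_succ, Matrix.add_apply,
        Matrix.smul_apply, Matrix.one_apply, sub_smul]
      linear_combination h
  have E2 : Mn.mulVec ψm = (-(ε : ℂ)) • (Bm m)ᴴ.mulVec ψ0 := by
    funext i
    have h := congrFun hψ ((0 : Fin 3), i)
    fin_cases i <;>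
    · simp [Hrep, Matrix.mulVec, dotProduct, Fintype.sum_prod_type, Fin.sum_univ_succ,
        replicaBlock, Matrix.one_apply] at h
      simp [hψm, hψ0, hMn, Matrix.mulVec, dotProduct, Fin.sum_univ_succ, Matrix.add_apply,
        Matrix.smul_apply, Matrix.one_apply, sub_smul]
      linear_combination h
  have E3 : (xiSigma ξ).mulVec ψ0 + (ε : ℂ) • (Bm m).mulVec ψm
      + (ε : ℂ) • (Bm m)ᴴ.mulVec ψ1 = E • ψ0 := by
    funext i
    have h := congrFun hψ ((1 : Fin 3), i)
    fin_cases i <;>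
    · simp [Hrep, Matrix.mulVec, dotProduct, Fintype.sum_prod_type, Fin.sum_univ_succ,
        replicaBlock, Matrix.one_apply] at h
      simp [hψm, hψ0, hψ1, Matrix.mulVec, dotProduct, Fin.sum_univ_succ, Matrix.add_apply,
        Matrix.smul_apply, Matrix.one_apply]
      linear_combination h
  have G1 : ψ1 = (-(ε : ℂ)) • (Mp⁻¹ * Bm m).mulVec ψ0 := by
    calc ψ1 = (Mp⁻¹ * Mp).mulVec ψ1 := by rw [Matrix.nonsing_inv_mul _ hup, Matrix.one_mulVec]
    _ = Mp⁻¹.mulVec (Mp.mulVec ψ1) := by rw [← Matrix.mulVec_mulVec]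
    _ = Mp⁻¹.mulVec ((-(ε : ℂ)) • (Bm m).mulVec ψ0) := by rw [E1]
    _ = (-(ε : ℂ)) • (Mp⁻¹ * Bm m).mulVec ψ0 := by
        rw [Matrix.mulVec_smul, Matrix.mulVec_mulVec]
  have G2 : ψm = (-(ε : ℂ)) • (Mn⁻¹ * (Bm m)ᴴ).mulVec ψ0 := by
    calc ψm = (Mn⁻¹ * Mn).mulVec ψm := by rw [Matrix.nonsing_inv_mul _ hun, Matrix.one_mulVec]
    _ = Mn⁻¹.mulVec (Mn.mulVec ψm) := by rw [← Matrix.mulVec_mulVec]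
    _ = Mn⁻¹.mulVec ((-(ε : ℂ)) • (Bm m)ᴴ.mulVec ψ0) := by rw [E2]
    _ = (-(ε : ℂ)) • (Mn⁻¹ * (Bm m)ᴴ).mulVec ψ0 := by
        rw [Matrix.mulVec_smul, Matrix.mulVec_mulVec]
  have G3 : (xiSigma ξ - E • (1 : Matrix (Fin 2) (Fin 2) ℂ) -
      ((ε : ℂ)) ^ 2 • ((Bm m)ᴴ * Mp⁻¹ * Bm m + Bm m * Mn⁻¹ * (Bm m)ᴴ)).mulVec ψ0 = 0 := by
    have h1 : (ε : ℂ) • (Bm m)ᴴ.mulVec ψ1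
        = -(((ε : ℂ)) ^ 2 • ((Bm m)ᴴ * Mp⁻¹ * Bm m).mulVec ψ0) := by
      rw [G1, Matrix.mulVec_smul, smul_smul, Matrix.mul_assoc, ← Matrix.mulVec_mulVec]
      rw [mul_neg, neg_smul, pow_two]; simp only [Matrix.mulVec_mulVec, Matrix.smul_mulVec, Matrix.mul_assoc]
    have h2 : (ε : ℂ) • (Bm m).mulVec ψm
        = -(((ε : ℂ)) ^ 2 • (Bm m * Mn⁻¹ * (Bm m)ᴴ).mulVec ψ0) := by
      rw [G2, Matrix.mulVec_smul, smul_smul, Matrix.mul_assoc, ← Matrix.mulVec_mulVec]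
      rw [mul_neg, neg_smul, pow_two]; simp only [Matrix.mulVec_mulVec, Matrix.smul_mulVec, Matrix.mul_assoc]
    have key := E3
    rw [h1, h2] at key
    rw [Matrix.sub_mulVec, Matrix.sub_mulVec, Matrix.smul_mulVec,
      Matrix.smul_mulVec, Matrix.one_mulVec, Matrix.add_mulVec, smul_add]
    have hre : xiSigma ξ *ᵥ ψ0 - E • ψ0 -
        ((ε : ℂ) ^ 2 • ((Bm m)ᴴ * Mp⁻¹ * Bm m) *ᵥ ψ0 + (ε : ℂ) ^ 2 • (Bm m * Mn⁻¹ * (Bm m)ᴴ) *ᵥ ψ0)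
        = (xiSigma ξ *ᵥ ψ0 + -((ε : ℂ) ^ 2 • (Bm m * Mn⁻¹ * (Bm m)ᴴ) *ᵥ ψ0)
          + -((ε : ℂ) ^ 2 • ((Bm m)ᴴ * Mp⁻¹ * Bm m) *ᵥ ψ0)) - E • ψ0 := by abel
    rw [hre, key, sub_self]
  refine ⟨G1, G2, G3, ?_⟩
  intro hne h0
  apply hne
  funext p
  obtain ⟨a, b⟩ := p
  have z1 : ψ1 = 0 := by rw [G1, h0]; simp
  have z2 : ψm = 0 := by rw [G2, h0]; simp
  fin_cases a
  · exact congrFun z2 b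
  · exact congrFun h0 b
  · exact congrFun z1 b
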